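/- If S and T are bounded linear operators on H = L²(ℝ, μ) each of which commutes with the orthogonal projections onto S_t⁺ and onto S_t⁻ for every t ∈ ℝ, then S T = T S. (The commutant of the nest 𝒩₁ is abelian; hence the von Neumann algebra generated by the nest projections is a maximal abelian selfadjoint algebra.) -/

import Mathlib

open MeasureTheory

/-- The closed subspace of `L²(ν)` of functions vanishing `ν`-a.e. on the set `s`. -/
noncomputable def vanishOn (ν : Measure ℝ) (s : Set ℝ) : Submodule ℂ (Lp ℂ 2 ν) where
  carrier := {f | (f : ℝ → ℂ) =ᵐ[ν.restrict s] 0}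
  add_mem' := by
    intro f g hf hg
    filter_upwards [hf, hg, ae_restrict_of_ae (Lp.coeFn_add f g)] with x hfx hgx hx
    show (↑↑(f + g) : ℝ → ℂ) x = 0
    rw [hx]
    simp only [Pi.add_apply]
    simp [hfx, hgx]
  zero_mem' := by
    filter_upwards [ae_restrict_of_ae (Lp.coeFn_zero ℂ 2 ν)] with x hx
    show (↑↑(0 : Lp ℂ 2 ν) : ℝ → ℂ) x = 0
    simpa using hx
  smul_mem' := by
    intro c f hf
    filter_upwards [hf, ae_restrict_of_ae (Lp.coeFn_smul c f)] with x hfx hx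
    show (↑↑(c • f) : ℝ → ℂ) x = 0
    rw [hx]
    simp [hfx]

/-- The measure `μ = ∑_{q ∈ ℚ} δ_q` on the Borel σ-algebra of `ℝ`. -/
noncomputable def mu : Measure ℝ := Measure.sum fun q : ℚ => Measure.dirac (q : ℝ)

lemma mu_singleton_ne_top (x : ℝ) : mu {x} ≠ ⊤ := by
  have h : mu {x} = ∑' q : ℚ, Measure.dirac (q : ℝ) {x} :=
    Measure.sum_apply _ (measurableSet_singleton x)
  rw [h]
  by_cases hx : ∃ q : ℚ, (q : ℝ) = x
  · obtain ⟨q₀, hq₀⟩ := hx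
    have hs : ∀ q : ℚ, q ≠ q₀ → Measure.dirac (q : ℝ) {x} = 0 := by
      intro q hq
      rw [Measure.dirac_apply]
      have : (q : ℝ) ≠ x := by
        intro h'
        exact hq (by exact_mod_cast hq₀ ▸ h')
      simp [Set.indicator, this]
    rw [tsum_eq_single q₀ hs, Measure.dirac_apply]
    simp [Set.indicator, hq₀]
  · have hs : ∀ q : ℚ, Measure.dirac (q : ℝ) {x} = 0 := by
      intro q
      rw [Measure.dirac_apply]
      have : (q : ℝ) ≠ x := fun h' => hx ⟨q, h'⟩
      simp [Set.indicator, this]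
    simp [hs]

/-- `e q` is the indicator function of the singleton `{q}` as an element of `H = L²(ℝ, μ)`. -/
noncomputable def e (q : ℚ) : Lp ℂ 2 mu :=
  indicatorConstLp 2 (measurableSet_singleton (q : ℝ)) (mu_singleton_ne_top _) (1 : ℂ)

/-- The subspace `S_t⁺ = {f ∈ L²(μ) : f = 0 μ-a.e. on (t, ∞)}`. -/
noncomputable def Splus (t : ℝ) : Submodule ℂ (Lp ℂ 2 mu) := vanishOn mu (Set.Ioi t)

/-- The subspace `S_t⁻ = {f ∈ L²(μ) : f = 0 μ-a.e. on [t, ∞)}`. -/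
noncomputable def Sminus (t : ℝ) : Submodule ℂ (Lp ℂ 2 mu) := vanishOn mu (Set.Ici t)

/-- The subspace `N_t = {f ∈ L²(λ) : f = 0 λ-a.e. on (t, ∞)}` of `K = L²(ℝ, λ)`,
where `λ` is Lebesgue measure. -/
noncomputable def Nt (t : ℝ) : Submodule ℂ (Lp ℂ 2 (volume : Measure ℝ)) :=
  vanishOn volume (Set.Ioi t)


section Aux

open scoped InnerProductSpace ComplexConjugate

lemma ae_mu_iff {p : ℝ → Prop} : (∀ᵐ x ∂mu, p x) ↔ ∀ q : ℚ, p (q : ℝ) := by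
  rw [mu, Measure.ae_sum_iff]
  simp

lemma mu_singleton (q : ℚ) : mu {(q : ℝ)} = 1 := by
  rw [mu, Measure.sum_apply _ (measurableSet_singleton _)]
  rw [tsum_eq_single q (fun p hp => ?_)]
  · simp
  · rw [Measure.dirac_apply]
    have : (p : ℝ) ≠ (q : ℝ) := by exact_mod_cast hp
    simp [Set.indicator, this]

lemma inner_e (q : ℚ) (f : Lp ℂ 2 mu) : ⟪e q, f⟫_ℂ = f (q : ℝ) := by
  rw [e, L2.inner_indicatorConstLp_eq_setIntegral_inner, integral_singleton, measureReal_def, mu_singleton]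
  simp

lemma mem_vanishOn_iff {s : Set ℝ} (hs : MeasurableSet s) {f : Lp ℂ 2 mu} :
    f ∈ vanishOn mu s ↔ ∀ q : ℚ, (q : ℝ) ∈ s → f (q : ℝ) = 0 := by
  change (f : ℝ → ℂ) =ᵐ[mu.restrict s] 0 ↔ _
  rw [Filter.EventuallyEq, ae_restrict_iff' hs, ae_mu_iff]
  simp

lemma e_mem_Splus (q : ℚ) : e q ∈ Splus (q : ℝ) := by
  rw [Splus, mem_vanishOn_iff measurableSet_Ioi]
  intro p hp
  rw [e]
  have h2 := indicatorConstLp_coeFn (p := 2) (μ := mu)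
    (hs := measurableSet_singleton ((q : ℝ))) (hμs := mu_singleton_ne_top _) (c := (1 : ℂ))
  have h3 := ae_mu_iff.mp h2 p
  rw [h3]
  have : (p : ℝ) ≠ (q : ℝ) := ne_of_gt hp
  simp [Set.indicator, this]

lemma e_mem_Sminus {q : ℚ} {t : ℝ} (h : (q : ℝ) < t) : e q ∈ Sminus t := by
  rw [Sminus, mem_vanishOn_iff measurableSet_Ici]
  intro p hp
  rw [e]
  have h2 := indicatorConstLp_coeFn (p := 2) (μ := mu)
    (hs := measurableSet_singleton ((q : ℝ))) (hμs := mu_singleton_ne_top _) (c := (1 : ℂ))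
  rw [ae_mu_iff.mp h2 p]
  have : (p : ℝ) ≠ (q : ℝ) := by
    intro hh; rw [hh] at hp; exact absurd hp (not_le.mpr h)
  simp [Set.indicator, this]

lemma Sminus_le_Splus (t : ℝ) : Sminus t ≤ Splus t := by
  intro f hf
  have h : (f : ℝ → ℂ) =ᵐ[mu.restrict (Set.Ici t)] 0 := hf
  show (f : ℝ → ℂ) =ᵐ[mu.restrict (Set.Ioi t)] 0
  exact h.filter_mono (ae_mono (Measure.restrict_mono Set.Ioi_subset_Ici_self le_rfl))

lemma eq_smul_e {q : ℚ} {f : Lp ℂ 2 mu} (h1 : f ∈ Splus (q : ℝ))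
    (h2 : f ∈ (Sminus ((q : ℝ)))ᗮ) : ∃ c : ℂ, f = c • e q := by
  refine ⟨f (q : ℝ), ?_⟩
  apply Lp.ext
  have hgt : ∀ p : ℚ, (q : ℝ) < (p : ℝ) → f (p : ℝ) = 0 := by
    rw [Splus, mem_vanishOn_iff measurableSet_Ioi] at h1
    exact fun p hp => h1 p hp
  have hlt : ∀ p : ℚ, (p : ℝ) < (q : ℝ) → f (p : ℝ) = 0 := by
    intro p hp
    have := h2 (e p) (e_mem_Sminus hp)
    rwa [inner_e] at this
  have hsmul := Lp.coeFn_smul (f (q : ℝ)) (e q)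
  have hind := indicatorConstLp_coeFn (p := 2) (μ := mu)
    (hs := measurableSet_singleton ((q : ℝ))) (hμs := mu_singleton_ne_top _) (c := (1 : ℂ))
  apply ae_mu_iff.mpr
  intro p
  rw [ae_mu_iff.mp hsmul p]
  show f (p : ℝ) = f (q : ℝ) • (e q : ℝ → ℂ) (p : ℝ)
  rw [show ((e q : ℝ → ℂ) (p : ℝ)) = Set.indicator {(q : ℝ)} (fun _ => (1 : ℂ)) (p : ℝ) from ae_mu_iff.mp hind p]
  rcases lt_trichotomy (p : ℝ) (q : ℝ) with h | h | h
  · rw [hlt p h]; simp [Set.indicator, ne_of_lt h]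
  · rw [h]; simp [Set.indicator]
  · rw [hgt p h]; simp [Set.indicator, ne_of_gt h]

lemma dense_span_e : Dense ((Submodule.span ℂ (Set.range e) : Submodule ℂ (Lp ℂ 2 mu)) : Set (Lp ℂ 2 mu)) := by
  rw [Submodule.dense_iff_topologicalClosure_eq_top, Submodule.topologicalClosure_eq_top_iff,
    Submodule.eq_bot_iff]
  intro f hf
  apply Lp.ext
  have hz : ∀ q : ℚ, f (q : ℝ) = 0 := by
    intro q
    have := (Submodule.mem_orthogonal _ f).mp hf (e q) (Submodule.subset_span ⟨q, rfl⟩)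
    rwa [inner_e] at this
  have h0 := Lp.coeFn_zero ℂ 2 mu
  apply ae_mu_iff.mpr
  intro p
  rw [ae_mu_iff.mp h0 p]
  exact hz p

end Aux
/-- If two bounded operators on `H = L²(ℝ, μ)` each commute with the orthogonal
projections onto `S_t⁺` and `S_t⁻` for every `t`, then they commute with each other:
the commutant of the nest `𝒩₁` is abelian. Here `Pp t` (resp. `Pm t`) is the
orthogonal projection onto `S_t⁺` (resp. `S_t⁻`). -/
theorem commutant_of_nest_one_abelian
    (Pp Pm : ℝ → (Lp ℂ 2 mu →L[ℂ] Lp ℂ 2 mu))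
    (hPp : ∀ t f, Pp t f ∈ Splus t ∧ f - Pp t f ∈ (Splus t)ᗮ)
    (hPm : ∀ t f, Pm t f ∈ Sminus t ∧ f - Pm t f ∈ (Sminus t)ᗮ)
    (S T : Lp ℂ 2 mu →L[ℂ] Lp ℂ 2 mu)
    (hS : (∀ t : ℝ, S.comp (Pp t) = (Pp t).comp S) ∧
        (∀ t : ℝ, S.comp (Pm t) = (Pm t).comp S))
    (hT : (∀ t : ℝ, T.comp (Pp t) = (Pp t).comp T) ∧
        (∀ t : ℝ, T.comp (Pm t) = (Pm t).comp T)) :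
    S.comp T = T.comp S := by

  -- For each rational q, S and T map `e q` to a scalar multiple of `e q`.
  have key : ∀ (R : Lp ℂ 2 mu →L[ℂ] Lp ℂ 2 mu),
      (∀ t : ℝ, R.comp (Pp t) = (Pp t).comp R) →
      (∀ t : ℝ, R.comp (Pm t) = (Pm t).comp R) →
      ∀ q : ℚ, ∃ c : ℂ, R (e q) = c • e q := by
    intro R hRp hRm q
    -- Pp fixes e q
    have hfix : Pp (q : ℝ) (e q) = e q := by
      have h1 := (hPp (q : ℝ) (e q)).1
      have h2 := (hPp (q : ℝ) (e q)).2
      have hd : e q - Pp (q : ℝ) (e q) ∈ Splus (q : ℝ) :=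
        Submodule.sub_mem _ (e_mem_Splus q) h1
      have : e q - Pp (q : ℝ) (e q) = 0 := by
        have := Submodule.inner_right_of_mem_orthogonal hd h2
        rwa [inner_self_eq_zero] at this
      have := sub_eq_zero.mp this
      exact this.symm
    -- e q ∈ (Sminus q)ᗮ
    have horth : e q ∈ (Sminus ((q : ℝ)))ᗮ := by
      rw [Submodule.mem_orthogonal]
      intro v hv
      rw [← inner_conj_symm, inner_e]
      have : (v : ℝ → ℂ) (q : ℝ) = 0 := by
        rw [Sminus, mem_vanishOn_iff measurableSet_Ici] at hv
        exact hv q (Set.self_mem_Ici)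
      simp [this]
    -- Pm kills e q
    have hkill : Pm (q : ℝ) (e q) = 0 := by
      have h1 := (hPm (q : ℝ) (e q)).1
      have h2 := (hPm (q : ℝ) (e q)).2
      have hm : Pm (q : ℝ) (e q) ∈ (Sminus ((q : ℝ)))ᗮ := by
        have : Pm (q : ℝ) (e q) = e q - (e q - Pm (q : ℝ) (e q)) := by abel
        rw [this]
        exact Submodule.sub_mem _ horth h2
      have := Submodule.inner_right_of_mem_orthogonal h1 hm
      rwa [inner_self_eq_zero] at this
    -- commute pointwise
    have hcp : ∀ x, R (Pp (q : ℝ) x) = Pp (q : ℝ) (R x) := fun x =>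
      congrFun (congrArg DFunLike.coe (hRp (q : ℝ))) x
    have hcm : ∀ x, R (Pm (q : ℝ) x) = Pm (q : ℝ) (R x) := fun x =>
      congrFun (congrArg DFunLike.coe (hRm (q : ℝ))) x
    -- R (e q) = Pp q (R e q) - Pm q (R e q)
    have hre : R (e q) = Pp (q : ℝ) (R (e q)) - Pm (q : ℝ) (R (e q)) := by
      conv_lhs => rw [← hfix]
      rw [hcp]
      have : R (Pm (q : ℝ) (e q)) = 0 := by rw [hkill, map_zero]
      rw [hcm] at this
      rw [this, sub_zero]
    set g := R (e q) with hg
    have hmem1 : Pp (q : ℝ) g - Pm (q : ℝ) g ∈ Splus (q : ℝ) :=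
      Submodule.sub_mem _ (hPp (q : ℝ) g).1 (Sminus_le_Splus _ (hPm (q : ℝ) g).1)
    have hmem2 : Pp (q : ℝ) g - Pm (q : ℝ) g ∈ (Sminus ((q : ℝ)))ᗮ := by
      have heq : Pp (q : ℝ) g - Pm (q : ℝ) g = (g - Pm (q : ℝ) g) - (g - Pp (q : ℝ) g) := by abel
      rw [heq]
      refine Submodule.sub_mem _ (hPm (q : ℝ) g).2 ?_
      exact Submodule.orthogonal_le (Sminus_le_Splus (q : ℝ)) (hPp (q : ℝ) g).2
    obtain ⟨c, hc⟩ := eq_smul_e hmem1 hmem2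
    exact ⟨c, by rw [hre, hc]⟩
  refine ContinuousLinearMap.ext_on dense_span_e ?_
  rintro x ⟨q, rfl⟩
  obtain ⟨cS, hcS⟩ := key S hS.1 hS.2 q
  obtain ⟨cT, hcT⟩ := key T hT.1 hT.2 q
  simp only [ContinuousLinearMap.comp_apply]
  rw [hcT, hcS, ContinuousLinearMap.map_smul, ContinuousLinearMap.map_smul, hcS, hcT, smul_comm]
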